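/- If a finite digraph D = (V,E) is an interval nest digraph, then D is reflexive and there exists a nest ordering on V. -/
import Mathlib


/-- A nest representation of a digraph `E`: closed bounded (nonempty) real intervals
`I_u = [aI u, bI u]` and `J_u = [aJ u, bJ u]` with `J_u ⊆ I_u` for every vertex `u`,
such that `u → v` is an arc iff `I_u ∩ J_v ≠ ∅`. -/
def IsNestRepresentation {V : Type*} (E : V → V → Prop)
    (aI bI aJ bJ : V → ℝ) : Prop :=
  (∀ u, aI u ≤ bI u) ∧ (∀ u, aJ u ≤ bJ u) ∧
  (∀ u, Set.Icc (aJ u) (bJ u) ⊆ Set.Icc (aI u) (bI u)) ∧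
  (∀ u v, E u v ↔ (Set.Icc (aI u) (bI u) ∩ Set.Icc (aJ v) (bJ v)).Nonempty)

/-- An interval nest digraph is one admitting a nest representation. -/
def IsIntervalNestDigraph {V : Type*} (E : V → V → Prop) : Prop :=
  ∃ aI bI aJ bJ : V → ℝ, IsNestRepresentation E aI bI aJ bJ

/-- The arc `uv` is symmetric: both `uv` and `vu` are arcs. -/
def SymArc {V : Type*} (E : V → V → Prop) (u v : V) : Prop := E u v ∧ E v u

/-- A nest ordering of a digraph `E`: a linear order `le` on the vertices such that
for all `u ≤ v ≤ w ≤ z` (repetitions allowed) properties (i), (ii), (iii) hold. -/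
def IsNestOrdering {V : Type*} (E : V → V → Prop) (le : V → V → Prop) : Prop :=
  IsLinearOrder V le ∧
  ∀ u v w z : V, le u v → le v w → le w z →
    ((E u w ∧ E u z → E u v ∨ (SymArc E v w ∧ SymArc E v z ∧ SymArc E w z)) ∧
     (E z u ∧ E z v → E z w ∨ (SymArc E w u ∧ SymArc E v u ∧ SymArc E w v)) ∧
     (E u z ∧ E v w → E u w ∨ E v z) ∧
     (E z u ∧ E w v → E z v ∨ E w u) ∧
     (E u w ∧ E v z → E v w ∨ E u z) ∧
     (E z v ∧ E w u → E z u ∨ E w v))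

/-- If a finite digraph `D = (V,E)` is an interval nest digraph, then `D` is reflexive
and there exists a nest ordering on `V`. -/
theorem interval_nest_implies_reflexive_and_nest_ordering
    {V : Type*} [Fintype V] (E : V → V → Prop)
    (h : IsIntervalNestDigraph E) :
    (∀ u, E u u) ∧ ∃ le : V → V → Prop, IsNestOrdering E le := by
  obtain ⟨aI, bI, aJ, bJ, hI, hJ, hsub, hE⟩ := h
  have hIa : ∀ u, aI u ≤ aJ u := fun u => (hsub u ⟨le_refl _, hJ u⟩).1
  have hJb : ∀ u, bJ u ≤ bI u := fun u => (hsub u ⟨hJ u, le_refl _⟩).2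
  have hE' : ∀ u v, E u v ↔ (aI u ≤ bJ v ∧ aJ v ≤ bI u) := by
    intro u v
    rw [hE, Set.Icc_inter_Icc, Set.nonempty_Icc, max_le_iff, le_min_iff, le_min_iff]
    constructor
    · rintro ⟨⟨_, h1⟩, h2, _⟩; exact ⟨h1, h2⟩
    · rintro ⟨h1, h2⟩; exact ⟨⟨hI u, h1⟩, h2, hJ v⟩
  refine ⟨fun u => (hE' u u).2 ⟨le_trans (hIa u) (hJ u), le_trans (hJ u) (hJb u)⟩, ?_⟩
  -- tie-breaking injection into ℝ
  set g : V → ℝ := fun u => ((Fintype.equivFin V u : ℕ) : ℝ) with hg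
  have hginj : Function.Injective g := by
    intro a b hab
    exact (Fintype.equivFin V).injective (Fin.ext (Nat.cast_injective hab))
  set le : V → V → Prop := fun u v => aJ u < aJ v ∨ (aJ u = aJ v ∧ g u ≤ g v) with hle_def
  have hle : ∀ {u v}, le u v → aJ u ≤ aJ v := by
    rintro u v (h | ⟨h, _⟩)
    · exact h.le
    · exact h.le
  refine ⟨le, { refl := ?_, trans := ?_, antisymm := ?_, total := ?_ }, ?_⟩
  · intro a; exact Or.inr ⟨rfl, le_refl _⟩
  · rintro a b c (h1 | ⟨h1, h1'⟩) (h2 | ⟨h2, h2'⟩)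
    · exact Or.inl (h1.trans h2)
    · exact Or.inl (lt_of_lt_of_le h1 h2.le)
    · exact Or.inl (lt_of_le_of_lt h1.le h2)
    · exact Or.inr ⟨h1.trans h2, h1'.trans h2'⟩
  · rintro a b (h1 | ⟨h1, h1'⟩) (h2 | ⟨h2, h2'⟩)
    · exact absurd h2 (asymm h1)
    · exact absurd h2 h1.ne'
    · exact absurd h1 h2.ne'
    · exact hginj (le_antisymm h1' h2')
  · intro a b
    rcases lt_trichotomy (aJ a) (aJ b) with h | h | h
    · exact Or.inl (Or.inl h)
    · rcases le_total (g a) (g b) with h' | h'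
      · exact Or.inl (Or.inr ⟨h, h'⟩)
      · exact Or.inr (Or.inr ⟨h.symm, h'⟩)
    · exact Or.inr (Or.inl h)
  · intro u v w z huv hvw hwz
    have o1 : aJ u ≤ aJ v := hle huv
    have o2 : aJ v ≤ aJ w := hle hvw
    have o3 : aJ w ≤ aJ z := hle hwz
    have nu := hIa u; have nu' := hJb u; have ju := hJ u
    have nv := hIa v; have nv' := hJb v; have jv := hJ v
    have nw := hIa w; have nw' := hJb w; have jw := hJ w
    have nz := hIa z; have nz' := hJb z; have jz := hJ z
    simp only [SymArc, hE']
    refine ⟨?_, ?_, ?_, ?_, ?_, ?_⟩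
    · rintro ⟨⟨h1, h2⟩, ⟨h3, h4⟩⟩
      exact Or.inl ⟨by linarith, by linarith⟩
    · rintro ⟨⟨h1, h2⟩, ⟨h3, h4⟩⟩
      by_cases hc : aI z ≤ bJ w
      · exact Or.inl ⟨hc, by linarith⟩
      · push_neg at hc
        right
        refine ⟨⟨⟨?_, ?_⟩, ?_, ?_⟩, ⟨⟨?_, ?_⟩, ?_, ?_⟩, ⟨⟨?_, ?_⟩, ?_, ?_⟩⟩ <;> linarith
    · rintro ⟨⟨h1, h2⟩, ⟨h3, h4⟩⟩
      exact Or.inl ⟨by linarith, by linarith⟩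
    · rintro ⟨⟨h1, h2⟩, ⟨h3, h4⟩⟩
      by_cases hc : aI z ≤ bJ v
      · exact Or.inl ⟨hc, by linarith⟩
      · push_neg at hc
        exact Or.inr ⟨by linarith, by linarith⟩
    · rintro ⟨⟨h1, h2⟩, ⟨h3, h4⟩⟩
      exact Or.inl ⟨by linarith, by linarith⟩
    · rintro ⟨⟨h1, h2⟩, ⟨h3, h4⟩⟩
      by_cases hc : aI z ≤ bJ u
      · exact Or.inl ⟨hc, by linarith⟩
      · push_neg at hc
        exact Or.inr ⟨by linarith, by linarith⟩
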